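/- For all real u with 0 < u < 1 we have ∫_0^∞ I_1(√u·t)·K_0(t)·t^2 dt = 2√u/(1-u)^2. -/

import Mathlib

open MeasureTheory Real

/-- Modified Bessel function of the first kind, order zero. -/
noncomputable def I0 (t : ℝ) : ℝ := (1/π) * ∫ θ in (0:ℝ)..π, Real.exp (t * Real.cos θ)

/-- Modified Bessel function of the second kind, order zero. -/
noncomputable def K0 (t : ℝ) : ℝ := ∫ u in Set.Ioi (0:ℝ), Real.exp (-t * Real.cosh u)

/-- Modified Bessel function of the first kind, order one: `I₁ = I₀'`. -/
noncomputable def I1 (t : ℝ) : ℝ := deriv I0 t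

/-- Modified Bessel function of the second kind, order one: `K₁ = -K₀'`. -/
noncomputable def K1 (t : ℝ) : ℝ := -deriv K0 t

open Set Filter Finset


lemma cos_pow_odd_zero (k : ℕ) : ∫ θ in (0:ℝ)..π, Real.cos θ ^ (2*k+1) = 0 := by
  induction k with
  | zero => simpa using integral_cos (a := 0) (b := π)
  | succ n ih =>
      have h := integral_cos_pow (a := 0) (b := π) (2*n+1)
      have : 2*(n+1)+1 = (2*n+1)+2 := by ring
      rw [this, h, ih]
      simp

lemma cos_pow_even_int (k : ℕ) :
    ∫ θ in (0:ℝ)..π, Real.cos θ ^ (2*k) = π * ∏ i ∈ range k, (2*(i:ℝ)+1)/(2*i+2) := by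
  induction k with
  | zero => simp
  | succ n ih =>
      have h := integral_cos_pow (a := 0) (b := π) (2*n)
      have e : 2*(n+1) = (2*n)+2 := by ring
      rw [e, h, ih, prod_range_succ]
      push_cast
      simp only [Real.sin_pi, Real.sin_zero]
      ring

lemma cos_pow_half_odd (m : ℕ) :
    ∫ x in (0:ℝ)..(π/2), Real.cos x ^ (2*m+1) = ∏ i ∈ range m, (2*(i:ℝ)+2)/(2*i+3) := by
  induction m with
  | zero => simpa using integral_cos (a := 0) (b := π/2)
  | succ n ih =>
      have h := integral_cos_pow (a := 0) (b := π/2) (2*n+1)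
      have e : 2*(n+1)+1 = (2*n+1)+2 := by ring
      rw [e, h, ih, prod_range_succ]
      push_cast
      simp only [Real.cos_pi_div_two, Real.sin_zero]
      ring

lemma Jval (m : ℕ) :
    ∫ s in (0:ℝ)..1, (1-s^2)^m = ∏ i ∈ range m, (2*(i:ℝ)+2)/(2*i+3) := by
  have h := integral_sin_pow_mul_cos_pow_odd (a := 0) (b := π/2) 0 m
  simp only [pow_zero, one_mul, Real.sin_zero, Real.sin_pi_div_two] at h
  rw [← cos_pow_half_odd m, ← h]

lemma prod_tel (m : ℕ) :
    ∏ i ∈ range m, ((2*(i:ℝ)+1)/(2*i+3)) = 1/(2*m+1) := by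
  induction m with
  | zero => simp
  | succ n ih =>
      rw [prod_range_succ, ih]
      push_cast
      have h1 : (2*(n:ℝ)+1) ≠ 0 := by positivity
      have h2 : (2*(n:ℝ)+3) ≠ 0 := by positivity
      field_simp
      ring


lemma hasDerivAt_tanh (v : ℝ) : HasDerivAt Real.tanh (1 / Real.cosh v ^ 2) v := by
  have h : HasDerivAt (fun x => Real.sinh x / Real.cosh x)
      ((Real.cosh v * Real.cosh v - Real.sinh v * Real.sinh v) / Real.cosh v ^ 2) v :=
    (Real.hasDerivAt_sinh v).div (Real.hasDerivAt_cosh v) (Real.cosh_pos v).ne'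
  have e : Real.cosh v * Real.cosh v - Real.sinh v * Real.sinh v = 1 := by
    nlinarith [Real.cosh_sq_sub_sinh_sq v]
  rw [e] at h
  have : Real.tanh = fun x => Real.sinh x / Real.cosh x := by
    funext x; exact Real.tanh_eq_sinh_div_cosh x
  rw [this]
  exact h

lemma tendsto_tanh_atTop : Tendsto Real.tanh atTop (nhds 1) := by
  have key : ∀ v : ℝ, Real.tanh v = (1 - Real.exp (-(2*v))) / (1 + Real.exp (-(2*v))) := by
    intro v
    have hnum : 1 - Real.exp (-(2*v)) = Real.exp (-v) * (Real.exp v - Real.exp (-v)) := by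
      rw [mul_sub, ← Real.exp_add, ← Real.exp_add]
      norm_num
      ring_nf
    have hden : 1 + Real.exp (-(2*v)) = Real.exp (-v) * (Real.exp v + Real.exp (-v)) := by
      rw [mul_add, ← Real.exp_add, ← Real.exp_add]
      norm_num
      ring_nf
    rw [hnum, hden, mul_div_mul_left _ _ (Real.exp_ne_zero _)]
    rw [Real.tanh_eq_sinh_div_cosh, Real.sinh_eq, Real.cosh_eq]
    have hb : Real.exp v + Real.exp (-v) ≠ 0 := by positivity
    field_simp
  have hfe : Real.tanh = fun v => (1 - Real.exp (-(2*v))) / (1 + Real.exp (-(2*v))) := funext key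
  rw [hfe]
  have h0 : Tendsto (fun v : ℝ => Real.exp (-(2*v))) atTop (nhds 0) :=
    Real.tendsto_exp_neg_atTop_nhds_zero.comp (Tendsto.const_mul_atTop two_pos tendsto_id)
  have hcont : ContinuousAt (fun y : ℝ => (1 - y) / (1 + y)) 0 := by
    apply ContinuousAt.div
    · fun_prop
    · fun_prop
    · norm_num
  have := hcont.tendsto.comp h0
  simpa [Function.comp_def] using this

lemma sech_integral (m : ℕ) :
    ∫ v in Ioi (0:ℝ), (1 / Real.cosh v) ^ (2*m+2)
      = ∏ i ∈ range m, (2*(i:ℝ)+2)/(2*i+3) := by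
  set P : ℝ → ℝ := fun x => ∫ s in (0:ℝ)..x, (1-s^2)^m with hP
  have hc : Continuous fun s : ℝ => (1-s^2)^m := by fun_prop
  have hPderiv : ∀ x : ℝ, HasDerivAt P ((1-x^2)^m) x := fun x =>
    (hc.integral_hasStrictDerivAt 0 x).hasDerivAt
  have hG : ∀ v : ℝ, HasDerivAt (fun w => P (Real.tanh w)) ((1 / Real.cosh v) ^ (2*m+2)) v := by
    intro v
    have h := (hPderiv (Real.tanh v)).comp v (hasDerivAt_tanh v)
    have hc0 : Real.cosh v ≠ 0 := (Real.cosh_pos v).ne'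
    have ht : 1 - Real.tanh v ^ 2 = 1 / Real.cosh v ^ 2 := by
      rw [Real.tanh_eq_sinh_div_cosh, div_pow]
      have h := Real.cosh_sq_sub_sinh_sq v
      field_simp
      try linarith [h]
    have e : (1 - Real.tanh v ^ 2) ^ m * (1 / Real.cosh v ^ 2) = (1 / Real.cosh v) ^ (2*m+2) := by
      rw [ht]
      field_simp
      rw [div_pow, div_pow, one_pow, one_pow, ← pow_mul, pow_add]
      field_simp
    rw [← e]
    exact h
  have htend : Tendsto (fun w => P (Real.tanh w)) atTop (nhds (P 1)) :=
    ((hPderiv 1).continuousAt.tendsto).comp tendsto_tanh_atTop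
  have := integral_Ioi_of_hasDerivAt_of_nonneg
    (g := fun w => P (Real.tanh w)) (g' := fun v => (1 / Real.cosh v) ^ (2*m+2)) (a := 0)
    (hG 0).continuousAt.continuousWithinAt (fun x _ => hG x) (fun v _ => by positivity) htend
  rw [this]
  simp only [Real.tanh_zero, hP]
  rw [intervalIntegral.integral_same, sub_zero, Jval]

lemma exp_mul_integral {b : ℝ} (hb : 0 < b) :
    IntegrableOn (fun x => Real.exp (-(b*x))) (Ioi (0:ℝ)) ∧
    ∫ x in Ioi (0:ℝ), Real.exp (-(b*x)) = 1/b := by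
  have hG : ∀ x : ℝ, HasDerivAt (fun y => -(Real.exp (-(b*y))/b)) (Real.exp (-(b*x))) x := by
    intro x
    have h1 : HasDerivAt (fun y : ℝ => -(b*y)) (-b) x := by
      simpa [Pi.neg_def] using ((hasDerivAt_id x).const_mul b).neg
    have h2 := (h1.exp).div_const b
    have e : Real.exp (-(b*x)) * (-b) / b = -(Real.exp (-(b*x))) := by
      field_simp
    rw [e] at h2
    simpa [Pi.neg_def] using h2.neg
  have htend : Tendsto (fun y => -(Real.exp (-(b*y))/b)) atTop (nhds 0) := by
    have h0 : Tendsto (fun y : ℝ => Real.exp (-(b*y))) atTop (nhds 0) :=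
      Real.tendsto_exp_neg_atTop_nhds_zero.comp (Tendsto.const_mul_atTop hb tendsto_id)
    simpa using (h0.div_const b).neg
  constructor
  · exact integrableOn_Ioi_deriv_of_nonneg (hG 0).continuousAt.continuousWithinAt
      (fun x _ => hG x) (fun x _ => (Real.exp_pos _).le) htend
  · have := integral_Ioi_of_hasDerivAt_of_nonneg (hG 0).continuousAt.continuousWithinAt
      (fun x _ => hG x) (fun x _ => (Real.exp_pos _).le) htend
    rw [this]
    norm_num



lemma exp_tsum (x : ℝ) : Real.exp x = ∑' n : ℕ, x^n / (Nat.factorial n : ℝ) := by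
  rw [Real.exp_eq_exp_ℝ, NormedSpace.exp_eq_tsum_div]

lemma I1_eq (s : ℝ) : I1 s = (1/π) * ∫ θ in (0:ℝ)..π, Real.cos θ * Real.exp (s * Real.cos θ) := by
  have key : HasDerivAt (fun t => ∫ θ in (0:ℝ)..π, Real.exp (t * Real.cos θ))
      (∫ θ in (0:ℝ)..π, Real.cos θ * Real.exp (s * Real.cos θ)) s := by
    have h := intervalIntegral.hasDerivAt_integral_of_dominated_loc_of_deriv_le
      (F := fun x θ => Real.exp (x * Real.cos θ))
      (F' := fun x θ => Real.cos θ * Real.exp (x * Real.cos θ))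
      (bound := fun _ => Real.exp (|s|+1)) (a := 0) (b := π) (μ := volume) (x₀ := s)
      (s := Metric.ball s 1) (Metric.ball_mem_nhds s one_pos)
      (Eventually.of_forall fun x => (Continuous.aestronglyMeasurable (by fun_prop)))
      ((Continuous.intervalIntegrable (by fun_prop)) _ _)
      (Continuous.aestronglyMeasurable (by fun_prop))
      (Eventually.of_forall fun θ _ => fun x hx => by
        have h1 : |Real.cos θ| ≤ 1 := Real.abs_cos_le_one θ
        have h2 : x * Real.cos θ ≤ |s| + 1 := by
          have : |x| < |s| + 1 := by
            have := mem_ball_iff_norm.mp hx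
            calc |x| ≤ |s| + |x - s| := by
                  have := abs_sub_abs_le_abs_sub x s; linarith
              _ < |s| + 1 := by rw [Real.norm_eq_abs] at this; linarith
          calc x * Real.cos θ ≤ |x * Real.cos θ| := le_abs_self _
            _ = |x| * |Real.cos θ| := abs_mul _ _
            _ ≤ |x| * 1 := by nlinarith [abs_nonneg x]
            _ ≤ |s| + 1 := by linarith
        calc ‖Real.cos θ * Real.exp (x * Real.cos θ)‖
            = |Real.cos θ| * Real.exp (x * Real.cos θ) := by
              rw [Real.norm_eq_abs, abs_mul, abs_of_pos (Real.exp_pos _)]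
          _ ≤ 1 * Real.exp (|s|+1) := by
              have := Real.exp_le_exp.mpr h2
              nlinarith [Real.exp_pos (x * Real.cos θ)]
          _ = Real.exp (|s|+1) := one_mul _)
      ((Continuous.intervalIntegrable continuous_const) _ _)
      (Eventually.of_forall fun θ _ => fun x _ => by
        have h := (hasDerivAt_mul_const (Real.cos θ) (x := x)).exp
        simpa [mul_comm] using h)
    exact h.2
  have hI0 : HasDerivAt I0 ((1/π) * ∫ θ in (0:ℝ)..π, Real.cos θ * Real.exp (s * Real.cos θ)) s :=
    key.const_mul (1/π)
  exact hI0.deriv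

set_option maxHeartbeats 1000000 in
noncomputable def besselC (k : ℕ) : ℝ :=
  (∏ i ∈ Finset.range (k+1), (2*(i:ℝ)+1)/(2*i+2)) / (Nat.factorial (2*k+1) : ℝ)

lemma besselC_nonneg (k : ℕ) : 0 ≤ besselC k := by
  apply div_nonneg
  · apply Finset.prod_nonneg
    intro i _
    positivity
  · positivity

set_option maxHeartbeats 1000000 in
lemma I1_series (s : ℝ) :
    I1 s = ∑' k : ℕ, besselC k * s^(2*k+1) := by
  simp only [besselC]
  classical
  set f : ℕ → ℝ → ℝ := fun n θ => Real.cos θ * ((s * Real.cos θ)^n / (Nat.factorial n : ℝ)) with hf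
  have hpt : ∀ θ, Real.cos θ * Real.exp (s * Real.cos θ) = ∑' n, f n θ := by
    intro θ
    rw [exp_tsum]
    exact (tsum_mul_left).symm
  have hmeas : ∀ n : ℕ, AEStronglyMeasurable (f n) (volume.restrict (Ioc (0:ℝ) π)) := by
    intro n
    exact Continuous.aestronglyMeasurable (by fun_prop)
  have hbnd : ∀ (n : ℕ) (θ : ℝ), ‖f n θ‖ ≤ |s|^n / (Nat.factorial n : ℝ) := by
    intro n θ
    have h1 : |Real.cos θ| ≤ 1 := Real.abs_cos_le_one θ
    have h2 : |s * Real.cos θ| ≤ |s| := by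
      rw [abs_mul]
      nlinarith [abs_nonneg s, abs_nonneg (Real.cos θ)]
    have hfac : (0:ℝ) < (Nat.factorial n : ℝ) := by positivity
    calc ‖f n θ‖ = |Real.cos θ| * (|s * Real.cos θ|^n / (Nat.factorial n : ℝ)) := by
          rw [Real.norm_eq_abs, hf]
          simp [abs_mul, abs_div, abs_pow, abs_of_pos hfac]
      _ ≤ 1 * (|s|^n / (Nat.factorial n : ℝ)) := by
          gcongr
      _ = |s|^n / (Nat.factorial n : ℝ) := one_mul _
  have hsum0 : Summable (fun n : ℕ => |s|^n / (Nat.factorial n : ℝ)) :=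
    Real.summable_pow_div_factorial |s|
  have hswap : ∫ θ in Ioc (0:ℝ) π, (∑' n, f n θ) = ∑' n, ∫ θ in Ioc (0:ℝ) π, f n θ := by
    apply integral_tsum hmeas
    have hb : ∀ (n : ℕ) (θ : ℝ), (‖f n θ‖₊ : ENNReal) ≤ ENNReal.ofReal (|s|^n / (Nat.factorial n : ℝ)) := by
      intro n θ
      rw [← enorm_eq_nnnorm, ← ofReal_norm]
      exact ENNReal.ofReal_le_ofReal (hbnd n θ)
    have key : ∀ n : ℕ, ∫⁻ θ in Ioc (0:ℝ) π, (‖f n θ‖₊ : ENNReal)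
        ≤ ENNReal.ofReal (|s|^n / (Nat.factorial n : ℝ)) * ENNReal.ofReal π := by
      intro n
      calc ∫⁻ θ in Ioc (0:ℝ) π, (‖f n θ‖₊ : ENNReal)
          ≤ ∫⁻ _ in Ioc (0:ℝ) π, ENNReal.ofReal (|s|^n / (Nat.factorial n : ℝ)) :=
            lintegral_mono (fun θ => hb n θ)
        _ = ENNReal.ofReal (|s|^n / (Nat.factorial n : ℝ)) * volume (Ioc (0:ℝ) π) := by
            rw [setLIntegral_const]
        _ = ENNReal.ofReal (|s|^n / (Nat.factorial n : ℝ)) * ENNReal.ofReal π := by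
            rw [Real.volume_Ioc, sub_zero]
    apply ne_of_lt
    calc ∑' n, ∫⁻ θ in Ioc (0:ℝ) π, (‖f n θ‖₊ : ENNReal)
        ≤ ∑' n, ENNReal.ofReal (|s|^n / (Nat.factorial n : ℝ)) * ENNReal.ofReal π :=
          ENNReal.tsum_le_tsum key
      _ = (∑' n, ENNReal.ofReal (|s|^n / (Nat.factorial n : ℝ))) * ENNReal.ofReal π :=
          ENNReal.tsum_mul_right
      _ = ENNReal.ofReal (∑' n, |s|^n / (Nat.factorial n : ℝ)) * ENNReal.ofReal π := by
          rw [ENNReal.ofReal_tsum_of_nonneg (fun n => by positivity) hsum0]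
      _ < ⊤ := ENNReal.mul_lt_top ENNReal.ofReal_lt_top ENNReal.ofReal_lt_top
  have hterm : ∀ n : ℕ, (∫ θ in Ioc (0:ℝ) π, f n θ)
      = (s^n / (Nat.factorial n : ℝ)) * ∫ θ in (0:ℝ)..π, Real.cos θ ^ (n+1) := by
    intro n
    rw [← intervalIntegral.integral_of_le Real.pi_pos.le]
    rw [← intervalIntegral.integral_const_mul]
    apply intervalIntegral.integral_congr
    intro θ _
    simp only [hf]
    rw [mul_pow, pow_succ]
    ring
  set g : ℕ → ℝ := fun n => (s^n / (Nat.factorial n : ℝ)) * ∫ θ in (0:ℝ)..π, Real.cos θ ^ (n+1)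
    with hg
  have hI : I1 s = (1/π) * ∑' n, g n := by
    rw [I1_eq s, intervalIntegral.integral_of_le Real.pi_pos.le]
    rw [show (∫ θ in Ioc (0:ℝ) π, Real.cos θ * Real.exp (s * Real.cos θ))
        = ∫ θ in Ioc (0:ℝ) π, (∑' n, f n θ) from by
      apply setIntegral_congr_fun measurableSet_Ioc
      intro θ _; exact hpt θ]
    rw [hswap]
    congr 1
    exact tsum_congr hterm
  have hge : ∀ k : ℕ, g (2*k) = 0 := by
    intro k
    have : (2*k) + 1 = 2*k+1 := rfl
    simp only [hg]
    rw [cos_pow_odd_zero k, mul_zero]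
  have hWbound : ∀ j : ℕ, |∫ θ in (0:ℝ)..π, Real.cos θ ^ j| ≤ π := by
    intro j
    have h := intervalIntegral.norm_integral_le_of_norm_le_const
      (C := 1) (f := fun θ => Real.cos θ ^ j) (a := 0) (b := π) (fun θ _ => by
        rw [Real.norm_eq_abs, abs_pow]
        exact pow_le_one₀ (abs_nonneg _) (Real.abs_cos_le_one θ))
    rw [Real.norm_eq_abs] at h
    simpa [abs_of_pos Real.pi_pos] using h
  have hodd_sum : Summable (fun k => g (2*k+1)) := by
    apply Summable.of_norm_bounded
      (g := fun k => (|s|^(2*k+1) / (Nat.factorial (2*k+1) : ℝ)) * π)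
    · have hinj : Function.Injective (fun k : ℕ => 2*k+1) := by intro a b h; dsimp at h; omega
      exact (hsum0.comp_injective hinj).mul_right π
    · intro k
      simp only [hg]
      rw [norm_mul]
      apply mul_le_mul
      · rw [norm_div, Real.norm_eq_abs, Real.norm_eq_abs, abs_pow]
        rw [abs_of_pos (by positivity : (0:ℝ) < (Nat.factorial (2*k+1) : ℝ))]
      · rw [Real.norm_eq_abs]; exact hWbound _
      · exact norm_nonneg _
      · positivity
  have heven_sum : Summable (fun k => g (2*k)) := by
    have hfe : (fun k : ℕ => g (2*k)) = fun _ => (0:ℝ) := funext hge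
    rw [hfe]
    exact summable_zero
  have hsplit : ∑' n, g n = (∑' k, g (2*k)) + ∑' k, g (2*k+1) :=
    (tsum_even_add_odd heven_sum hodd_sum).symm
  have hzero : (∑' k, g (2*k)) = 0 := by
    have hfe : (fun k : ℕ => g (2*k)) = fun _ => (0:ℝ) := funext hge
    rw [hfe, tsum_zero]
  rw [hI, hsplit, hzero, zero_add, ← tsum_mul_left]
  apply tsum_congr
  intro k
  simp only [hg]
  have he : 2*k+1+1 = 2*(k+1) := by ring
  rw [he, cos_pow_even_int (k+1)]
  have hπ : (π:ℝ) ≠ 0 := Real.pi_ne_zero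
  field_simp

lemma K0_meas : MeasureTheory.StronglyMeasurable K0 := by
  have hc : Continuous fun p : ℝ × ℝ => Real.exp (-p.1 * Real.cosh p.2) := by fun_prop
  exact hc.stronglyMeasurable.integral_prod_right'

lemma K0_nonneg (t : ℝ) : 0 ≤ K0 t :=
  integral_nonneg fun v => (Real.exp_pos _).le

lemma cosh_ge {v : ℝ} (hv : 0 ≤ v) : (1+v)/2 ≤ Real.cosh v := by
  have h1 : 1 ≤ Real.cosh v := Real.one_le_cosh v
  have h2 : v ≤ Real.sinh v := Real.self_le_sinh_iff.mpr hv
  have h3 : Real.sinh v < Real.cosh v := Real.sinh_lt_cosh v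
  linarith

lemma exp_cosh_bound {t v : ℝ} (ht : 0 < t) (hv : 0 ≤ v) :
    Real.exp (-t * Real.cosh v) ≤ Real.exp (-(t/2)) * Real.exp (-(t/2*v)) := by
  rw [← Real.exp_add]
  apply Real.exp_le_exp.mpr
  have := cosh_ge hv
  nlinarith

lemma exp_cosh_int {t : ℝ} (ht : 0 < t) :
    IntegrableOn (fun v => Real.exp (-t * Real.cosh v)) (Ioi (0:ℝ)) := by
  have hmaj : IntegrableOn (fun v => Real.exp (-(t/2)) * Real.exp (-(t/2*v))) (Ioi (0:ℝ)) :=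
    ((exp_mul_integral (by linarith : (0:ℝ) < t/2)).1).const_mul _
  apply Integrable.mono hmaj
    (Continuous.aestronglyMeasurable (by fun_prop))
  rw [ae_restrict_iff' measurableSet_Ioi]
  apply Eventually.of_forall
  intro v hv
  rw [Real.norm_eq_abs, abs_of_pos (Real.exp_pos _), Real.norm_eq_abs,
    abs_of_pos (by positivity)]
  exact exp_cosh_bound ht (le_of_lt hv)

lemma K0_le {t : ℝ} (ht : 0 < t) : K0 t ≤ Real.exp (-(t/2)) * (2/t) := by
  have hmaj : IntegrableOn (fun v => Real.exp (-(t/2)) * Real.exp (-(t/2*v))) (Ioi (0:ℝ)) :=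
    ((exp_mul_integral (by linarith : (0:ℝ) < t/2)).1).const_mul _
  have h1 : K0 t ≤ ∫ v in Ioi (0:ℝ), Real.exp (-(t/2)) * Real.exp (-(t/2*v)) := by
    apply setIntegral_mono_on (exp_cosh_int ht) hmaj measurableSet_Ioi
    intro v hv
    exact exp_cosh_bound ht (le_of_lt hv)
  calc K0 t ≤ ∫ v in Ioi (0:ℝ), Real.exp (-(t/2)) * Real.exp (-(t/2*v)) := h1
    _ = Real.exp (-(t/2)) * ∫ v in Ioi (0:ℝ), Real.exp (-(t/2*v)) := by
        rw [integral_const_mul]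
    _ = Real.exp (-(t/2)) * (2/t) := by
        rw [(exp_mul_integral (by linarith : (0:ℝ) < t/2)).2]
        congr 1
        rw [one_div]
        field_simp

set_option maxHeartbeats 1000000 in
lemma moment_exp (m : ℕ) {b : ℝ} (hb : 0 < b) :
    IntegrableOn (fun t => t^m * Real.exp (-(b*t))) (Ioi (0:ℝ)) ∧
    ∫ t in Ioi (0:ℝ), t^m * Real.exp (-(b*t))
      = (Nat.factorial m : ℝ) / b^(m+1) := by
  constructor
  · have h := integrableOn_rpow_mul_exp_neg_mul_rpow (p := 1) (s := m) (b := b)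
      (lt_of_lt_of_le neg_one_lt_zero (Nat.cast_nonneg m)) one_pos hb
    apply h.congr_fun ?_ measurableSet_Ioi
    intro x hx
    simp only [Real.rpow_one, Real.rpow_natCast]
    ring_nf
  · have h := Real.integral_rpow_mul_exp_neg_mul_Ioi
      (a := (m:ℝ)+1) (r := b) (by positivity) hb
    have e1 : ∀ t : ℝ, t ^ ((m:ℝ)+1-1) = t^m := by
      intro t
      rw [show ((m:ℝ)+1-1) = (m:ℝ) by ring, Real.rpow_natCast]
    simp_rw [e1] at h
    rw [h]
    have e2 : ((1:ℝ)/b) ^ ((m:ℝ)+1) = 1/b^(m+1) := by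
      rw [show ((m:ℝ)+1) = ((m+1 : ℕ) : ℝ) by push_cast; ring, Real.rpow_natCast]
      rw [one_div, one_div, inv_pow]
    have e3 : Real.Gamma ((m:ℝ)+1) = (Nat.factorial m : ℝ) := Real.Gamma_nat_eq_factorial m
    rw [e2, e3]
    ring

set_option maxHeartbeats 1000000 in
lemma K0_moment (n : ℕ) :
    IntegrableOn (fun t => t^(n+1) * K0 t) (Ioi (0:ℝ)) ∧
    ∫ t in Ioi (0:ℝ), t^(n+1) * K0 t
      = (Nat.factorial (n+1) : ℝ) * ∫ v in Ioi (0:ℝ), (1/Real.cosh v)^(n+2) := by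
  have hFc : Continuous (fun p : ℝ × ℝ => p.1^(n+1) * Real.exp (-p.1 * Real.cosh p.2)) := by
    fun_prop
  have hFmeas : AEStronglyMeasurable (fun p : ℝ × ℝ => p.1^(n+1) * Real.exp (-p.1 * Real.cosh p.2))
      ((volume.restrict (Ioi (0:ℝ))).prod (volume.restrict (Ioi (0:ℝ)))) :=
    hFc.aestronglyMeasurable
  have h1 : ∀ᵐ t ∂(volume.restrict (Ioi (0:ℝ))), Integrable
      (fun v => t^(n+1) * Real.exp (-t * Real.cosh v)) (volume.restrict (Ioi (0:ℝ))) := by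
    rw [ae_restrict_iff' measurableSet_Ioi]
    apply Eventually.of_forall
    intro t ht
    exact (exp_cosh_int ht).const_mul _
  have hnormint : ∀ t ∈ Ioi (0:ℝ),
      (∫ v in Ioi (0:ℝ), ‖t^(n+1) * Real.exp (-t * Real.cosh v)‖) = t^(n+1) * K0 t := by
    intro t ht
    have he : ∀ v : ℝ, ‖t^(n+1) * Real.exp (-t * Real.cosh v)‖
        = t^(n+1) * Real.exp (-t * Real.cosh v) := by
      intro v
      rw [Real.norm_eq_abs, abs_of_nonneg]
      have : (0:ℝ) < t := ht
      positivity
    simp_rw [he]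
    rw [integral_const_mul]
    rfl
  have hg : IntegrableOn (fun t => t^(n+1) * (Real.exp (-(t/2)) * (2/t))) (Ioi (0:ℝ)) := by
    have h : IntegrableOn (fun t => 2 * (t^n * Real.exp (-(1/2*t)))) (Ioi (0:ℝ)) :=
      ((moment_exp n (b := 1/2) (by norm_num)).1).const_mul 2
    apply h.congr_fun ?_ measurableSet_Ioi
    intro x hx
    have hx0 : x ≠ 0 := ne_of_gt hx
    simp only
    rw [pow_succ]
    field_simp
  have h2 : Integrable (fun t => ∫ v in Ioi (0:ℝ), ‖t^(n+1) * Real.exp (-t * Real.cosh v)‖)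
      (volume.restrict (Ioi (0:ℝ))) := by
    apply Integrable.mono hg
    · have hcont : Continuous fun p : ℝ × ℝ => ‖p.1^(n+1) * Real.exp (-p.1 * Real.cosh p.2)‖ :=
        hFc.norm
      exact (hcont.stronglyMeasurable.integral_prod_right').aestronglyMeasurable
    · rw [ae_restrict_iff' measurableSet_Ioi]
      apply Eventually.of_forall
      intro t ht
      have ht' : (0:ℝ) < t := ht
      rw [hnormint t ht, Real.norm_eq_abs,
        abs_of_nonneg (mul_nonneg (by positivity) (K0_nonneg t))]
      calc t^(n+1) * K0 t ≤ t^(n+1) * (Real.exp (-(t/2)) * (2/t)) :=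
            mul_le_mul_of_nonneg_left (K0_le ht') (by positivity)
        _ ≤ ‖t^(n+1) * (Real.exp (-(t/2)) * (2/t))‖ := le_abs_self _
  have hInt : Integrable (fun p : ℝ × ℝ => p.1^(n+1) * Real.exp (-p.1 * Real.cosh p.2))
      ((volume.restrict (Ioi (0:ℝ))).prod (volume.restrict (Ioi (0:ℝ)))) :=
    (integrable_prod_iff hFmeas).2 ⟨h1, h2⟩
  have hswap := integral_integral_swap
    (f := fun t v => t^(n+1) * Real.exp (-t * Real.cosh v))
    (μ := volume.restrict (Ioi (0:ℝ))) (ν := volume.restrict (Ioi (0:ℝ))) hInt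
  have hLHS : (∫ t in Ioi (0:ℝ), (∫ v in Ioi (0:ℝ), t^(n+1) * Real.exp (-t * Real.cosh v)))
      = ∫ t in Ioi (0:ℝ), t^(n+1) * K0 t := by
    apply setIntegral_congr_fun measurableSet_Ioi
    intro t _
    show (∫ v in Ioi (0:ℝ), t^(n+1) * Real.exp (-t * Real.cosh v)) = t^(n+1) * K0 t
    rw [integral_const_mul]
    rfl
  have hRHS : (∫ v in Ioi (0:ℝ), (∫ t in Ioi (0:ℝ), t^(n+1) * Real.exp (-t * Real.cosh v)))
      = ∫ v in Ioi (0:ℝ), (Nat.factorial (n+1) : ℝ) * (1/Real.cosh v)^(n+2) := by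
    apply setIntegral_congr_fun measurableSet_Ioi
    intro v _
    show (∫ t in Ioi (0:ℝ), t^(n+1) * Real.exp (-t * Real.cosh v))
      = (Nat.factorial (n+1) : ℝ) * (1/Real.cosh v)^(n+2)
    have hcv : (0:ℝ) < Real.cosh v := Real.cosh_pos v
    have he : ∀ t : ℝ, t^(n+1) * Real.exp (-t * Real.cosh v)
        = t^(n+1) * Real.exp (-(Real.cosh v * t)) := by
      intro t; ring_nf
    simp_rw [he]
    rw [(moment_exp (n+1) hcv).2]
    rw [div_pow, one_pow, div_eq_mul_one_div]
  constructor
  · have heq : EqOn (fun t => ∫ v in Ioi (0:ℝ), ‖t^(n+1) * Real.exp (-t * Real.cosh v)‖)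
        (fun t => t^(n+1) * K0 t) (Ioi (0:ℝ)) := fun t ht => hnormint t ht
    exact IntegrableOn.congr_fun h2 heq measurableSet_Ioi
  · rw [← hLHS, hswap, hRHS, integral_const_mul]

lemma coeff_eval (k : ℕ) :
    besselC k * ((Nat.factorial (2*k+3) : ℝ) * ∏ i ∈ range (k+1), (2*(i:ℝ)+2)/(2*i+3))
      = 2*(k:ℝ)+2 := by
  have hfact : (Nat.factorial (2*k+3) : ℝ)
      = ((2*(k:ℝ)+3) * (2*(k:ℝ)+2)) * (Nat.factorial (2*k+1) : ℝ) := by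
    rw [show 2*k+3 = (2*k+2)+1 from rfl, Nat.factorial_succ,
      show 2*k+2 = (2*k+1)+1 from rfl, Nat.factorial_succ]
    push_cast
    ring
  have hprod : (∏ i ∈ range (k+1), (2*(i:ℝ)+1)/(2*i+2))
      * (∏ i ∈ range (k+1), (2*(i:ℝ)+2)/(2*i+3)) = 1/(2*(k:ℝ)+3) := by
    rw [← prod_mul_distrib]
    have hcong : ∀ i ∈ range (k+1),
        ((2*(i:ℝ)+1)/(2*i+2)) * ((2*(i:ℝ)+2)/(2*i+3)) = (2*(i:ℝ)+1)/(2*(i:ℝ)+3) := by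
      intro i _
      have h2 : (2*(i:ℝ)+2) ≠ 0 := by positivity
      field_simp
    rw [prod_congr rfl hcong, prod_tel (k+1)]
    push_cast
    ring_nf
  have hne : (Nat.factorial (2*k+1) : ℝ) ≠ 0 := by positivity
  have hne3 : (2*(k:ℝ)+3) ≠ 0 := by positivity
  rw [besselC, hfact]
  calc (∏ i ∈ range (k+1), (2*(i:ℝ)+1)/(2*i+2)) / (Nat.factorial (2*k+1) : ℝ)
        * ((((2*(k:ℝ)+3) * (2*(k:ℝ)+2)) * (Nat.factorial (2*k+1) : ℝ))
          * ∏ i ∈ range (k+1), (2*(i:ℝ)+2)/(2*i+3))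
      = ((2*(k:ℝ)+3) * (2*(k:ℝ)+2)) * ((∏ i ∈ range (k+1), (2*(i:ℝ)+1)/(2*i+2))
          * (∏ i ∈ range (k+1), (2*(i:ℝ)+2)/(2*i+3))) := by
        field_simp
    _ = ((2*(k:ℝ)+3) * (2*(k:ℝ)+2)) * (1/(2*(k:ℝ)+3)) := by rw [hprod]
    _ = 2*(k:ℝ)+2 := by field_simp

theorem weber_schafheitlin_I1K0_t2 (u : ℝ) (hu0 : 0 < u) (hu1 : u < 1) :
    ∫ t in Set.Ioi (0:ℝ), I1 (Real.sqrt u * t) * K0 t * t^2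
      = 2 * Real.sqrt u / (1 - u)^2 := by
  have ha0 : 0 < Real.sqrt u := Real.sqrt_pos.mpr hu0
  have ha2 : Real.sqrt u ^ 2 = u := Real.sq_sqrt hu0.le
  set a := Real.sqrt u with ha
  -- the termwise integrals
  have hexp : ∀ k : ℕ, a^(2*k+1) = u^k * a := by
    intro k
    rw [pow_succ, pow_mul, ha2]
  have hsech : ∀ k : ℕ, ∫ v in Ioi (0:ℝ), (1/Real.cosh v)^(2*k+2+2)
      = ∏ i ∈ range (k+1), (2*(i:ℝ)+2)/(2*i+3) := by
    intro k
    have h := sech_integral (k+1)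
    rwa [show 2*(k+1)+2 = 2*k+2+2 by ring] at h
  have hval : ∀ k : ℕ, ∫ t in Ioi (0:ℝ), (besselC k * a^(2*k+1)) * (t^(2*k+3) * K0 t)
      = (2*(k:ℝ)+2) * a^(2*k+1) := by
    intro k
    rw [integral_const_mul]
    have hm := (K0_moment (2*k+2)).2
    rw [show (2*k+2)+1 = 2*k+3 by ring] at hm
    rw [hm, hsech k]
    have hc := coeff_eval k
    linear_combination (a^(2*k+1)) * hc
  have hint_k : ∀ k : ℕ, IntegrableOn
      (fun t => (besselC k * a^(2*k+1)) * (t^(2*k+3) * K0 t)) (Ioi (0:ℝ)) := by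
    intro k
    have h := (K0_moment (2*k+2)).1
    rw [show (2*k+2)+1 = 2*k+3 by ring] at h
    exact h.const_mul _
  have hmeas_k : ∀ k : ℕ, AEStronglyMeasurable
      (fun t => (besselC k * a^(2*k+1)) * (t^(2*k+3) * K0 t))
      (volume.restrict (Ioi (0:ℝ))) := by
    intro k
    exact (((continuous_pow (2*k+3)).stronglyMeasurable.mul K0_meas).aestronglyMeasurable).const_mul _
  -- summability of values
  have hu_norm : ‖u‖ < 1 := by rw [Real.norm_eq_abs, abs_of_pos hu0]; exact hu1
  have hs1 : Summable (fun k : ℕ => (k:ℝ) * u^k) := by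
    have h := summable_pow_mul_geometric_of_norm_lt_one (R := ℝ) 1 hu_norm
    simpa using h
  have hs2 : Summable (fun k : ℕ => u^k) := summable_geometric_of_lt_one hu0.le hu1
  have hsum_kp1 : Summable (fun k : ℕ => ((k:ℝ)+1) * u^k) := by
    have h := hs1.add hs2
    apply h.congr
    intro k
    ring
  have hval_sum : Summable (fun k : ℕ => (2*(k:ℝ)+2) * a^(2*k+1)) := by
    apply (hsum_kp1.mul_left (2*a)).congr
    intro k
    rw [hexp k]
    ring
  have htsum_kp1 : ∑' k : ℕ, ((k:ℝ)+1) * u^k = 1/(1-u)^2 := by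
    have h1 : ∑' k : ℕ, (k:ℝ) * u^k = u/(1-u)^2 :=
      tsum_coe_mul_geometric_of_norm_lt_one hu_norm
    have h2 : ∑' k : ℕ, u^k = (1-u)⁻¹ := tsum_geometric_of_lt_one hu0.le hu1
    have hne : (1:ℝ) - u ≠ 0 := by intro h; nlinarith
    have hsplit : ∑' k : ℕ, ((k:ℝ)+1) * u^k
        = (∑' k : ℕ, (k:ℝ) * u^k) + ∑' k : ℕ, u^k := by
      rw [← Summable.tsum_add hs1 hs2]
      apply tsum_congr
      intro k
      ring
    rw [hsplit, h1, h2]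
    field_simp
    ring
  -- rewrite the integrand as a series
  have hpt : ∀ t ∈ Ioi (0:ℝ), I1 (a * t) * K0 t * t^2
      = ∑' k : ℕ, (besselC k * a^(2*k+1)) * (t^(2*k+3) * K0 t) := by
    intro t _
    rw [I1_series (a*t), ← tsum_mul_right, ← tsum_mul_right]
    apply tsum_congr
    intro k
    rw [mul_pow]
    ring
  rw [setIntegral_congr_fun measurableSet_Ioi hpt]
  -- swap sum and integral
  rw [integral_tsum hmeas_k ?fin]
  case fin =>
    have heq : ∀ k : ℕ, ∫⁻ t in Ioi (0:ℝ),
        ‖(besselC k * a^(2*k+1)) * (t^(2*k+3) * K0 t)‖₊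
        = ENNReal.ofReal ((2*(k:ℝ)+2) * a^(2*k+1)) := by
      intro k
      have hnn : 0 ≤ᵐ[volume.restrict (Ioi (0:ℝ))]
          fun t => (besselC k * a^(2*k+1)) * (t^(2*k+3) * K0 t) := by
        filter_upwards [ae_restrict_mem measurableSet_Ioi] with t ht
        have ht' : (0:ℝ) < t := ht
        have := besselC_nonneg k
        have := K0_nonneg t
        simp only [Pi.zero_apply]
        positivity
      have h1 := ofReal_integral_eq_lintegral_ofReal (hint_k k) hnn
      rw [hval k] at h1
      have h2 : ∫⁻ t in Ioi (0:ℝ), ‖(besselC k * a^(2*k+1)) * (t^(2*k+3) * K0 t)‖₊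
          = ∫⁻ t in Ioi (0:ℝ),
            ENNReal.ofReal ((besselC k * a^(2*k+1)) * (t^(2*k+3) * K0 t)) := by
        apply lintegral_congr_ae
        filter_upwards [hnn] with t htnn
        rw [← Real.enorm_eq_ofReal htnn, enorm_eq_nnnorm]
      rw [h2, ← h1]
    simp_rw [enorm_eq_nnnorm, heq]
    rw [← ENNReal.ofReal_tsum_of_nonneg (fun k => by positivity) hval_sum]
    exact ENNReal.ofReal_ne_top
  -- evaluate the sum
  simp_rw [hval]
  have hfin : ∑' k : ℕ, (2*(k:ℝ)+2) * a^(2*k+1) = 2 * a / (1-u)^2 := by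
    have hterm : ∀ k : ℕ, (2*(k:ℝ)+2) * a^(2*k+1) = (2*a) * (((k:ℝ)+1) * u^k) := by
      intro k
      rw [hexp k]
      ring
    calc ∑' k : ℕ, (2*(k:ℝ)+2) * a^(2*k+1)
        = ∑' k : ℕ, (2*a) * (((k:ℝ)+1) * u^k) := tsum_congr hterm
      _ = (2*a) * ∑' k : ℕ, ((k:ℝ)+1) * u^k := tsum_mul_left
      _ = (2*a) * (1/(1-u)^2) := by rw [htsum_kp1]
      _ = 2 * a / (1-u)^2 := by ring
  rw [hfin]
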